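/- Let Λ be a left noetherian ring and let F be a non-zero 𝒳^op-module. If every family of morphisms between indecomposable modules in 𝒳 is noetherian, then there exists X ∈ 𝒳 such that F(X) has a universally minimal element. -/

import Mathlib

open CategoryTheory Limits

universe u

namespace Paper

/-- `𝒳` is a full additive subcategory of `Λ`-mod, closed under direct summands and
isomorphisms and containing the zero module, encoded as a predicate on `ModuleCat Λ`. -/
structure IsSubcat (Λ : Type u) [Ring Λ] (P : ModuleCat.{u} Λ → Prop) : Prop where
  fg : ∀ M, P M → Module.Finite Λ M
  zero_mem : P (ModuleCat.of Λ PUnit)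
  iso_closed : ∀ {M N : ModuleCat.{u} Λ}, (M ≅ N) → P M → P N
  sum_closed : ∀ {M N : ModuleCat.{u} Λ}, P M → P N → P (ModuleCat.of Λ (M × N))
  summand_closed : ∀ {M N : ModuleCat.{u} Λ}, P N →
    (∃ (i : M ⟶ N) (p : N ⟶ M), i ≫ p = 𝟙 M) → P M

/-- The composite `fᵢ₋₁ ∘ ⋯ ∘ f₀ : X 0 ⟶ X i` of a chain of morphisms. -/
def chainComp {C : Type*} [Category C] {X : ℕ → C} (f : ∀ i, X i ⟶ X (i + 1)) :
    ∀ i, X 0 ⟶ X i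
  | 0 => 𝟙 _
  | (i + 1) => chainComp f i ≫ f i

/-- The composite `g₀ ∘ ⋯ ∘ gᵢ₋₁ : X i ⟶ X 0` of a downward chain of morphisms. -/
def chainCompDown {C : Type*} [Category C] {X : ℕ → C} (g : ∀ i, X (i + 1) ⟶ X i) :
    ∀ i, X i ⟶ X 0
  | 0 => 𝟙 _
  | (i + 1) => g i ≫ chainCompDown g i

/-- Any family of homomorphisms between indecomposable modules in `𝒳` is noetherian. -/
def HomChainsNoetherian {Λ : Type u} [Ring Λ] (P : ModuleCat.{u} Λ → Prop) : Prop :=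
  ∀ X : ℕ → ObjectProperty.FullSubcategory P, (∀ i, Indecomposable (X i).obj) →
    ∀ f : ∀ i, X i ⟶ X (i + 1), (∀ i, chainComp f i ≠ 0) →
      ∃ n, ∀ k, n ≤ k → IsIso (f k)

/-- Any family of homomorphisms between indecomposable modules in `𝒳` is artinian. -/
def HomChainsArtinian {Λ : Type u} [Ring Λ] (P : ModuleCat.{u} Λ → Prop) : Prop :=
  ∀ X : ℕ → ObjectProperty.FullSubcategory P, (∀ i, Indecomposable (X i).obj) →
    ∀ g : ∀ i, X (i + 1) ⟶ X i, (∀ i, chainCompDown g i ≠ 0) →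
      ∃ n, ∀ k, n ≤ k → IsIso (g k)

/-- A subfunctor of an `Ab`-valued functor `F`. -/
structure Subfunctor {D : Type*} [Category D] (F : D ⥤ AddCommGrpCat.{u}) where
  pt : ∀ X : D, AddSubgroup (F.obj X)
  map_mem : ∀ {X Y : D} (f : X ⟶ Y) (x : F.obj X), x ∈ pt X → F.map f x ∈ pt Y

namespace Subfunctor

variable {D : Type*} [Category D] {F : D ⥤ AddCommGrpCat.{u}}

/-- Containment of subfunctors. -/
def le (S T : Subfunctor F) : Prop := ∀ X, S.pt X ≤ T.pt X

/-- A subfunctor of `F` is finitely generated if it is generated by finitely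
many elements. -/
def FG (S : Subfunctor F) : Prop :=
  ∃ (n : ℕ) (X : Fin n → D) (x : ∀ i, F.obj (X i)),
    (∀ i, x i ∈ S.pt (X i)) ∧ ∀ T : Subfunctor F, (∀ i, x i ∈ T.pt (X i)) → S.le T

/-- A subfunctor is noetherian if ascending chains of subfunctors below it stabilize. -/
def Noetherian (S : Subfunctor F) : Prop :=
  ∀ c : ℕ → Subfunctor F, (∀ n, (c n).le S) → (∀ n, (c n).le (c (n + 1))) →
    ∃ n, ∀ k, n ≤ k → (c k).le (c n)

/-- A subfunctor is artinian if descending chains of subfunctors below it stabilize. -/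
def Artinian (S : Subfunctor F) : Prop :=
  ∀ c : ℕ → Subfunctor F, (∀ n, (c n).le S) → (∀ n, (c (n + 1)).le (c n)) →
    ∃ n, ∀ k, n ≤ k → (c n).le (c k)

/-- A subfunctor is finite if it is both noetherian and artinian. -/
def Finite (S : Subfunctor F) : Prop := S.Noetherian ∧ S.Artinian

end Subfunctor

/-- A functor is noetherian if its ascending chains of subfunctors stabilize. -/
def NoetherianFunctor {D : Type*} [Category D] (F : D ⥤ AddCommGrpCat.{u}) : Prop :=
  ∀ c : ℕ → Subfunctor F, (∀ n, (c n).le (c (n + 1))) → ∃ n, ∀ k, n ≤ k → (c k).le (c n)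

/-- A functor is artinian if its descending chains of subfunctors stabilize. -/
def ArtinianFunctor {D : Type*} [Category D] (F : D ⥤ AddCommGrpCat.{u}) : Prop :=
  ∀ c : ℕ → Subfunctor F, (∀ n, (c (n + 1)).le (c n)) → ∃ n, ∀ k, n ≤ k → (c n).le (c k)

/-- A functor is finite if it is both noetherian and artinian. -/
def FiniteFunctor {D : Type*} [Category D] (F : D ⥤ AddCommGrpCat.{u}) : Prop :=
  NoetherianFunctor F ∧ ArtinianFunctor F

/-- A functor is locally finite if every finitely generated subfunctor is finite. -/
def LocallyFiniteFunctor {D : Type*} [Category D] (F : D ⥤ AddCommGrpCat.{u}) : Prop :=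
  ∀ S : Subfunctor F, S.FG → S.Finite

/-- The category of additive functors `D ⥤ Ab` is locally finite. -/
def ModLocallyFinite (D : Type*) [Category D] [Preadditive D] : Prop :=
  ∀ F : D ⥤ AddCommGrpCat.{u}, F.Additive → LocallyFiniteFunctor F

/-- `x ∈ F(X)` is a universally minimal element of the `𝒳ᵒᵖ`-module `F` : `x ≠ 0` and
`F(f)(x) = 0` for every morphism `f : X → X'` in `𝒳` which is not a split monomorphism. -/
def IsUniversallyMinimal {Λ : Type u} [Ring Λ] {P : ModuleCat.{u} Λ → Prop}
    (F : ObjectProperty.FullSubcategory P ⥤ AddCommGrpCat.{u}) (X : ObjectProperty.FullSubcategory P) (x : F.obj X) : Prop :=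
  x ≠ 0 ∧ ∀ (X' : ObjectProperty.FullSubcategory P) (f : X ⟶ X'),
    (¬∃ r : X' ⟶ X, f ≫ r = 𝟙 X) → F.map f x = 0

lemma exists_indec {Λ : Type u} [Ring Λ] [IsNoetherianRing Λ]
    {P : ModuleCat.{u} Λ → Prop} (hsub : IsSubcat Λ P)
    {F : ObjectProperty.FullSubcategory P ⥤ AddCommGrpCat.{u}} (hF : F.Additive)
    (X : ObjectProperty.FullSubcategory P) (x : F.obj X) (hx : x ≠ 0) :
    ∃ (Y : ObjectProperty.FullSubcategory P) (h : X ⟶ Y), Indecomposable Y.obj ∧ F.map h x ≠ 0 := by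
  haveI := hF
  haveI : Module.Finite Λ X.obj := hsub.fg _ X.2
  haveI : IsNoetherian Λ X.obj := isNoetherian_of_isNoetherianRing_of_finite Λ X.obj
  have wf : WellFounded ((· > ·) : Submodule Λ X.obj → Submodule Λ X.obj → Prop) :=
    IsNoetherian.wf inferInstance
  suffices H : ∀ (C : Submodule Λ X.obj) (W : ModuleCat.{u} Λ) (hW : P W) (j : W ⟶ X.obj),
      Function.Injective j → IsCompl (LinearMap.range j.hom) C →
      ∀ x' : F.obj ⟨W, hW⟩, x' ≠ 0 →
      ∃ (Y : ObjectProperty.FullSubcategory P) (h : (⟨W, hW⟩ : ObjectProperty.FullSubcategory P) ⟶ Y),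
        Indecomposable Y.obj ∧ F.map h x' ≠ 0 by
    have := H ⊥ X.obj X.2 (𝟙 X.obj) (fun a b hab => hab)
      (by
        have : LinearMap.range (ModuleCat.Hom.hom (𝟙 X.obj)) = ⊤ := eq_top_iff.mpr fun v _ => ⟨v, rfl⟩
        rw [this]; exact isCompl_top_bot) x hx
    exact this
  intro C
  induction C using wf.induction with
  | _ C IH =>
  intro W hW j hj hcompl x hx
  by_cases hzW : IsZero W
  · exfalso
    apply hx
    have hid : (𝟙 W : W ⟶ W) = 0 := (IsZero.iff_id_eq_zero W).mp hzW
    have : F.map (𝟙 (⟨W, hW⟩ : ObjectProperty.FullSubcategory P)) x = x := by rw [F.map_id]; rfl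
    rw [← this]
    have h0 : (𝟙 (⟨W, hW⟩ : ObjectProperty.FullSubcategory P)) = (0 : (⟨W, hW⟩ : ObjectProperty.FullSubcategory P) ⟶ ⟨W, hW⟩) := ObjectProperty.hom_ext _ hid
    rw [h0, F.map_zero]
    rfl
  by_cases hind : Indecomposable W
  · refine ⟨⟨W, hW⟩, 𝟙 _, hind, ?_⟩
    rw [F.map_id]
    simpa using hx
  -- decomposable case
  have hdec : ∃ (A B : ModuleCat.{u} Λ) (e : W ≅ A ⊞ B), ¬IsZero A ∧ ¬IsZero B := by
    unfold Indecomposable at hind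
    push_neg at hind
    obtain ⟨A, B, e, hAB⟩ := hind hzW
    exact ⟨A, B, e, hAB⟩
  obtain ⟨A, B, e, hA, hB⟩ := hdec
  have key : ∀ (A B : ModuleCat.{u} Λ) (iA : A ⟶ W) (qA : W ⟶ A) (iB : B ⟶ W) (qB : W ⟶ B),
      iA ≫ qA = 𝟙 A → iB ≫ qB = 𝟙 B → iB ≫ qA = 0 →
      qA ≫ iA + qB ≫ iB = 𝟙 W → ¬IsZero B →
      ∀ (hPA : P A),
        F.map (show (⟨W, hW⟩ : ObjectProperty.FullSubcategory P) ⟶ ⟨A, hPA⟩ from ObjectProperty.homMk qA) x ≠ 0 →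
      ∃ (Y : ObjectProperty.FullSubcategory P) (h : (⟨W, hW⟩ : ObjectProperty.FullSubcategory P) ⟶ Y),
        Indecomposable Y.obj ∧ F.map h x ≠ 0 := by
    intro A B iA qA iB qB hiAqA hiBqB hiBqA htot hB hPA hxA
    set NA : Submodule Λ X.obj := LinearMap.range (iA ≫ j).hom with hNAdef
    set NB : Submodule Λ X.obj := LinearMap.range (iB ≫ j).hom with hNBdef
    have hNAle : NA ≤ LinearMap.range j.hom := by
      rintro _ ⟨a, rfl⟩; exact ⟨iA a, rfl⟩
    have hNBle : NB ≤ LinearMap.range j.hom := by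
      rintro _ ⟨b, rfl⟩; exact ⟨iB b, rfl⟩
    -- every w : W decomposes
    have hdecomp : ∀ w : W, iA (qA w) + iB (qB w) = w := by
      intro w
      have := congrArg (fun (f : W ⟶ W) => f w) htot
      simpa using this
    have hinter : ∀ v, v ∈ NA → v ∈ NB → v = 0 := by
      rintro v ⟨a, ha⟩ ⟨b, hb⟩
      have hab : iA a = iB b := hj (by
        have h1 : j (iA a) = v := ha
        have h2 : j (iB b) = v := hb
        rw [h1, h2])
      have ha0 : a = 0 := by
        have := congrArg qA hab
        have h1 : qA (iA a) = a := by
          have := congrArg (fun (f : A ⟶ A) => f a) hiAqA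
          simpa using this
        have h2 : qA (iB b) = 0 := by
          have := congrArg (fun (f : B ⟶ A) => f b) hiBqA
          simpa using this
        rw [h1, h2] at this
        exact this
      rw [← ha, ha0]
      simp
    have hNB0 : NB ≠ ⊥ := by
      intro hbot
      apply hB
      have : ∀ b : B, b = 0 := by
        intro b
        have hmem : j (iB b) ∈ NB := ⟨b, rfl⟩
        rw [hbot] at hmem
        have : iB b = 0 := hj (by simpa using hmem)
        have h1 : qB (iB b) = b := by
          have := congrArg (fun (f : B ⟶ B) => f b) hiBqB
          simpa using this
        rw [← h1, this]
        simp
      haveI : Subsingleton B := ⟨fun a b => by rw [this a, this b]⟩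
      exact ModuleCat.isZero_of_subsingleton B
    have hlt : C < C ⊔ NB := by
      rcases lt_or_eq_of_le (le_sup_left : C ≤ C ⊔ NB) with h | h
      · exact h
      exfalso
      apply hNB0
      have hNBC : NB ≤ C := by rw [h]; exact le_sup_right
      have : NB ≤ ⊥ := by
        intro v hv
        exact (hcompl.disjoint).le_bot ⟨hNBle hv, hNBC hv⟩
      exact le_bot_iff.mp this
    have hsupAB : NA ⊔ NB = LinearMap.range j.hom := by
      apply le_antisymm (sup_le hNAle hNBle)
      rintro _ ⟨w, rfl⟩
      have : j w = j (iA (qA w)) + j (iB (qB w)) := by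
        rw [← map_add, hdecomp w]
      rw [this]
      exact Submodule.add_mem_sup ⟨qA w, rfl⟩ ⟨qB w, rfl⟩
    have hcompl' : IsCompl NA (C ⊔ NB) := by
      constructor
      · rw [Submodule.disjoint_def]
        intro v hvA hv
        rw [Submodule.mem_sup] at hv
        obtain ⟨c, hc, b, hb, rfl⟩ := hv
        have hcr : c ∈ LinearMap.range j.hom := by
          have : c = (c + b) - b := by abel
          rw [this]
          exact Submodule.sub_mem _ (hNAle hvA) (hNBle hb)
        have hc0 : c = 0 := (Submodule.disjoint_def.mp hcompl.disjoint) c hcr hc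
        rw [hc0, zero_add] at hvA ⊢
        exact hinter b hvA hb
      · rw [codisjoint_iff]
        have : NA ⊔ (C ⊔ NB) = (NA ⊔ NB) ⊔ C := by
          rw [sup_comm C NB, ← sup_assoc]
        rw [this, hsupAB, ← codisjoint_iff]
        exact hcompl.codisjoint
    have hiAinj : Function.Injective (iA ≫ j) := by
      have hinjA : Function.Injective iA := by
        intro a a' h
        have h1 : qA (iA a) = a := by
          have := congrArg (fun (f : A ⟶ A) => f a) hiAqA
          simpa using this
        have h2 : qA (iA a') = a' := by
          have := congrArg (fun (f : A ⟶ A) => f a') hiAqA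
          simpa using this
        rw [← h1, ← h2, h]
      intro a a' h
      exact hinjA (hj h)
    obtain ⟨Y, h, hYind, hYne⟩ := IH (C ⊔ NB) hlt A hPA (iA ≫ j) hiAinj (by exact hcompl')
      (F.map (show (⟨W, hW⟩ : ObjectProperty.FullSubcategory P) ⟶ ⟨A, hPA⟩ from ObjectProperty.homMk qA) x) hxA
    refine ⟨Y, (show (⟨W, hW⟩ : ObjectProperty.FullSubcategory P) ⟶ ⟨A, hPA⟩ from ObjectProperty.homMk qA) ≫ h, hYind, ?_⟩
    rw [F.map_comp]
    exact hYne
  -- split x along the decomposition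
  obtain ⟨qA, iA, qB, iB, hiAqA, hiBqB, hiBqA, hiAqB, htot⟩ :
      ∃ (qA : W ⟶ A) (iA : A ⟶ W) (qB : W ⟶ B) (iB : B ⟶ W),
        iA ≫ qA = 𝟙 A ∧ iB ≫ qB = 𝟙 B ∧ iB ≫ qA = 0 ∧ iA ≫ qB = 0 ∧
          qA ≫ iA + qB ≫ iB = 𝟙 W := by
    refine ⟨e.hom ≫ biprod.fst, biprod.inl ≫ e.inv, e.hom ≫ biprod.snd, biprod.inr ≫ e.inv,
      by simp, by simp, by simp, by simp, ?_⟩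
    have h1 : e.hom ≫ (𝟙 (A ⊞ B)) ≫ e.inv = 𝟙 W := by simp
    rw [← biprod.total] at h1
    rw [← h1, Preadditive.add_comp, Preadditive.comp_add]
    simp only [Category.assoc]
  have hPA : P A := hsub.summand_closed hW ⟨iA, qA, hiAqA⟩
  have hPB : P B := hsub.summand_closed hW ⟨iB, qB, hiBqB⟩
  by_cases hxA : F.map (show (⟨W, hW⟩ : ObjectProperty.FullSubcategory P) ⟶ ⟨A, hPA⟩ from ObjectProperty.homMk qA) x ≠ 0
  · exact key A B iA qA iB qB hiAqA hiBqB hiBqA htot hB hPA hxA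
  · push_neg at hxA
    have hxB : F.map (show (⟨W, hW⟩ : ObjectProperty.FullSubcategory P) ⟶ ⟨B, hPB⟩ from ObjectProperty.homMk qB) x ≠ 0 := by
      intro hxB
      apply hx
      have hid : F.map (𝟙 (⟨W, hW⟩ : ObjectProperty.FullSubcategory P)) x = x := by rw [F.map_id]; rfl
      rw [← hid]
      have heq : (𝟙 (⟨W, hW⟩ : ObjectProperty.FullSubcategory P)) =
          (show (⟨W, hW⟩ : ObjectProperty.FullSubcategory P) ⟶ ⟨A, hPA⟩ from ObjectProperty.homMk qA) ≫
            (show (⟨A, hPA⟩ : ObjectProperty.FullSubcategory P) ⟶ ⟨W, hW⟩ from ObjectProperty.homMk iA)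
          + (show (⟨W, hW⟩ : ObjectProperty.FullSubcategory P) ⟶ ⟨B, hPB⟩ from ObjectProperty.homMk qB) ≫
            (show (⟨B, hPB⟩ : ObjectProperty.FullSubcategory P) ⟶ ⟨W, hW⟩ from ObjectProperty.homMk iB) := ObjectProperty.hom_ext _ htot.symm
      rw [heq, F.map_add, F.map_comp, F.map_comp]
      have happ : ∀ (f g : F.obj (⟨W, hW⟩ : ObjectProperty.FullSubcategory P) ⟶ F.obj (⟨W, hW⟩ : ObjectProperty.FullSubcategory P)),
          (f + g) x = f x + g x := fun f g => rfl
      rw [happ]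
      change (F.map _) ((F.map _) x) + (F.map _) ((F.map _) x) = 0
      rw [hxA, hxB, map_zero, map_zero, add_zero]
    exact key B A iB qB iA qA hiBqB hiAqA hiAqB (by rw [add_comm]; exact htot) hA hPB hxB

/-- If `Λ` is left noetherian, every family of morphisms between
indecomposable modules in `𝒳` is noetherian, and `F` is a non-zero `𝒳ᵒᵖ`-module, then
`F(X)` has a universally minimal element for some `X ∈ 𝒳`. -/
theorem statement3 {Λ : Type u} [Ring Λ] [IsNoetherianRing Λ]
    (P : ModuleCat.{u} Λ → Prop) (hsub : IsSubcat Λ P)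
    (hchains : HomChainsNoetherian P)
    (F : ObjectProperty.FullSubcategory P ⥤ AddCommGrpCat.{u}) (hF : F.Additive)
    (hne : ∃ (X : ObjectProperty.FullSubcategory P) (x : F.obj X), x ≠ 0) :
    ∃ (X : ObjectProperty.FullSubcategory P) (x : F.obj X), IsUniversallyMinimal F X x := by
  haveI := hF
  classical
  by_contra hcon
  have hcon' : ∀ (X : ObjectProperty.FullSubcategory P) (x : F.obj X), ¬IsUniversallyMinimal F X x :=
    fun X x h => hcon ⟨X, x, h⟩
  have step : ∀ p : {p : Σ Y : ObjectProperty.FullSubcategory P, F.obj Y //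
      Indecomposable p.1.obj ∧ p.2 ≠ 0},
      ∃ (q : {p : Σ Y : ObjectProperty.FullSubcategory P, F.obj Y // Indecomposable p.1.obj ∧ p.2 ≠ 0})
        (f : p.1.1 ⟶ q.1.1), F.map f p.1.2 = q.1.2 ∧ ¬IsIso f := by
    rintro ⟨⟨Y, y⟩, hYind, hy⟩
    have hnu := hcon' Y y
    have hex : ∃ (X' : ObjectProperty.FullSubcategory P) (g : Y ⟶ X'),
        (¬∃ r : X' ⟶ Y, g ≫ r = 𝟙 Y) ∧ F.map g y ≠ 0 := by
      by_contra h'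
      exact hnu ⟨hy, fun X' g hg => by
        by_contra hne''
        exact h' ⟨X', g, hg, hne''⟩⟩
    obtain ⟨X', g, hg, hgne⟩ := hex
    obtain ⟨Z, h, hZind, hZne⟩ := exists_indec hsub hF X' (F.map g y) hgne
    have hZne' : F.map (g ≫ h) y ≠ 0 := by
      rw [F.map_comp]; exact hZne
    refine ⟨⟨⟨Z, F.map (g ≫ h) y⟩, hZind, hZne'⟩, g ≫ h, rfl, ?_⟩
    intro hiso
    haveI := hiso
    exact hg ⟨h ≫ inv (g ≫ h), by rw [← Category.assoc, IsIso.hom_inv_id]⟩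
  choose nxt fn hfn hniso using step
  obtain ⟨X0, x0, hx0⟩ := hne
  obtain ⟨Y0, h0, hY0ind, hY0ne⟩ := exists_indec hsub hF X0 x0 hx0
  let seq : ℕ → {p : Σ Y : ObjectProperty.FullSubcategory P, F.obj Y //
      Indecomposable p.1.obj ∧ p.2 ≠ 0} :=
    fun n => Nat.rec ⟨⟨Y0, F.map h0 x0⟩, hY0ind, hY0ne⟩ (fun _ p => nxt p) n
  let Xs : ℕ → ObjectProperty.FullSubcategory P := fun n => (seq n).1.1
  let fs : ∀ n, Xs n ⟶ Xs (n + 1) := fun n => fn (seq n)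
  have hchain : ∀ n, F.map (chainComp fs n) (seq 0).1.2 = (seq n).1.2 := by
    intro n
    induction n with
    | zero =>
      show F.map (𝟙 _) _ = _
      rw [F.map_id]; rfl
    | succ n ih =>
      show F.map (chainComp fs n ≫ fs n) _ = _
      rw [F.map_comp]
      change F.map (fs n) (F.map (chainComp fs n) _) = _
      rw [ih]
      exact hfn (seq n)
  have hnz : ∀ n, chainComp fs n ≠ 0 := by
    intro n h0'
    apply (seq n).2.2
    rw [← hchain n, h0', F.map_zero]
    rfl
  obtain ⟨n, hiso⟩ := hchains Xs (fun n => (seq n).2.1) fs hnz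
  exact hniso (seq n) (hiso n le_rfl)

end Paper
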